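/- arXiv:2001.11014 — 3 statements merged into one kernel-verified Lean document; each statement's English description precedes it below -/
import Mathlib

section
/- Under the same stationarity conditions with $\theta > 0$ and $\hat{p}_i > 0$, each length is uniquely determined and given by $\ell_i = \frac{\lambda - 2\theta\log 2}{3} + \frac{1}{\log 2} W\!\left(\frac{\theta(\log 2)^2}{\hat{p}_i} 2^{\frac{-\lambda + 2\theta\log 2}{3}}\right)$, where $W$ is the principal Lambert W function. -/
open Finset

/-- The principal branch of the Lambert W function on `[0,∞)`, defined as the
nonnegative solution of `x eˣ = y`. -/
noncomputable def lambertW (y : ℝ) : ℝ :=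
  sInf {x : ℝ | 0 ≤ x ∧ x * Real.exp x = y}

lemma lambertW_mono_aux {a b : ℝ} (ha : 0 ≤ a) (hab : a < b) :
    a * Real.exp a < b * Real.exp b :=
  calc a * Real.exp a ≤ a * Real.exp b :=
        mul_le_mul_of_nonneg_left (Real.exp_le_exp.2 hab.le) ha
    _ < b * Real.exp b := mul_lt_mul_of_pos_right hab (Real.exp_pos b)

lemma lambertW_spec {x : ℝ} (hx : 0 ≤ x) : lambertW (x * Real.exp x) = x := by
  have hset : {t : ℝ | 0 ≤ t ∧ t * Real.exp t = x * Real.exp x} = {x} := by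
    ext t
    simp only [Set.mem_setOf_eq, Set.mem_singleton_iff]
    constructor
    · rintro ⟨ht, heq⟩
      by_contra hne
      rcases lt_or_gt_of_ne hne with h | h
      · exact absurd heq (ne_of_lt (lambertW_mono_aux ht h))
      · exact absurd heq (ne_of_gt (lambertW_mono_aux hx h))
    · rintro rfl; exact ⟨hx, rfl⟩
  unfold lambertW
  rw [hset, csInf_singleton]

/-- Under the stationarity conditions with `θ > 0` and `p̂ᵢ > 0`, each
codeword length is uniquely determined and given by
`ℓᵢ = (λ − 2θ log 2)/3 + (1/log 2) W(θ(log 2)²/p̂ᵢ · 2^{(−λ + 2θ log 2)/3})`. -/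
theorem lengths_via_lambertW {k : ℕ}
    (phat : Fin k → ℝ) (hp : ∀ i, 0 < phat i)
    (ℓ : Fin k → ℝ) (lam θ EL : ℝ) (hθ : 0 < θ)
    (hEL : EL = ∑ i, phat i * ℓ i)
    (hELval : EL = (lam + θ * Real.log 2) / 3)
    (hstat : ∀ i, phat i * ℓ i + 2 * phat i * EL - lam * phat i
      - θ * Real.log 2 * (2:ℝ) ^ (-(ℓ i)) = 0) :
    ∀ i, ℓ i = (lam - 2 * θ * Real.log 2) / 3
      + (1 / Real.log 2) *
        lambertW (θ * (Real.log 2)^2 / phat i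
          * (2:ℝ) ^ ((-lam + 2 * θ * Real.log 2) / 3)) := by
  have hlog : 0 < Real.log 2 := Real.log_pos one_lt_two
  intro i
  have hpi := hp i
  set c : ℝ := (-lam + 2 * θ * Real.log 2) / 3 with hc
  have key : phat i * (ℓ i + c) = θ * Real.log 2 * (2:ℝ) ^ (-(ℓ i)) := by
    have h := hstat i
    rw [hELval] at h
    rw [hc]
    linear_combination h
  have hrpow : (0:ℝ) < (2:ℝ) ^ (-(ℓ i)) := Real.rpow_pos_of_pos two_pos _
  have hsum : ℓ i + c = θ * Real.log 2 * (2:ℝ) ^ (-(ℓ i)) / phat i := by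
    field_simp
    linarith [key]
  have hsumpos : 0 < ℓ i + c := by
    rw [hsum]
    positivity
  set x : ℝ := (ℓ i + c) * Real.log 2 with hxdef
  have hx : 0 ≤ x := le_of_lt (mul_pos hsumpos hlog)
  have hexp : Real.exp x = (2:ℝ) ^ (ℓ i + c) := by
    rw [Real.rpow_def_of_pos two_pos, hxdef]
    ring_nf
  have h2 : (2:ℝ) ^ (-(ℓ i)) * (2:ℝ) ^ (ℓ i) = 1 := by
    rw [← Real.rpow_add two_pos]; simp
  have key2 : phat i * (ℓ i + c) * (2:ℝ) ^ (ℓ i) = θ * Real.log 2 := by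
    rw [key, mul_assoc, h2, mul_one]
  have hxe : x * Real.exp x
      = θ * (Real.log 2)^2 / phat i * (2:ℝ) ^ c := by
    rw [hexp, Real.rpow_add two_pos, hxdef]
    rw [div_mul_eq_mul_div, eq_div_iff hpi.ne']
    linear_combination (Real.log 2 * (2:ℝ) ^ c) * key2
  have hW : lambertW (θ * (Real.log 2)^2 / phat i * (2:ℝ) ^ c) = x := by
    rw [← hxe]; exact lambertW_spec hx
  rw [hW, hxdef, hc]
  field_simp
  ring
end

section
/- If all $k$ symbols are equiprobable, $\hat p_i = 1/k$, then the lengths $\ell_i = \log_2 k$ satisfy Kraft with equality and minimize the age functional $\frac{\mathbb{E}[L^2]}{2\mathbb{E}[L]} + \mathbb{E}[L]$ over all real-valued lengths satisfying $\sum_i 2^{-\ell_i} \le 1$, achieving $\Delta = \frac{3}{2}\log_2 k$. -/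
open Finset

/-- Key Kraft bound: for uniform weights, feasible lengths have average at least `log₂ k`. -/
lemma kraft_sum_lower {k : ℕ} (hk : 2 ≤ k) (ℓ : Fin k → ℝ) (hnn : ∀ i, 0 ≤ ℓ i)
    (hkraft : (∑ i, (2:ℝ) ^ (-(ℓ i))) ≤ 1) :
    (k:ℝ) * Real.logb 2 k ≤ ∑ i, ℓ i := by
  have hk0 : (0:ℝ) < k := by exact_mod_cast (by omega : 0 < k)
  -- AM-GM with weights 1/k on z i = 2^(-ℓ i)
  have hw : ∀ i ∈ (univ : Finset (Fin k)), (0:ℝ) ≤ 1 / k := fun i _ => by positivity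
  have hw' : ∑ _i : Fin k, (1 / (k:ℝ)) = 1 := by
    rw [Finset.sum_const, Finset.card_univ, Fintype.card_fin, nsmul_eq_mul]
    field_simp
  have hz : ∀ i ∈ (univ : Finset (Fin k)), (0:ℝ) ≤ (2:ℝ) ^ (-(ℓ i)) := fun i _ =>
    Real.rpow_nonneg (by norm_num) _
  have amgm := Real.geom_mean_le_arith_mean_weighted univ (fun _ => 1 / (k:ℝ))
    (fun i => (2:ℝ) ^ (-(ℓ i))) hw hw' hz
  have hprod : (∏ i : Fin k, ((2:ℝ) ^ (-(ℓ i))) ^ (1 / (k:ℝ)))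
      = (2:ℝ) ^ (-(∑ i, ℓ i) / k) := by
    have h : ∀ i : Fin k, ((2:ℝ) ^ (-(ℓ i))) ^ (1 / (k:ℝ)) = (2:ℝ) ^ (-(ℓ i) * (1 / k)) :=
      fun i => (Real.rpow_mul (by norm_num : (0:ℝ) ≤ 2) (-(ℓ i)) (1 / k)).symm
    rw [Finset.prod_congr rfl (fun i _ => h i),
      ← Real.rpow_sum_of_pos (by norm_num : (0:ℝ) < 2)]
    congr 1
    rw [← Finset.sum_mul]
    rw [← Finset.sum_neg_distrib]
    ring
  have hsum : ∑ i : Fin k, (1 / (k:ℝ)) * ((2:ℝ) ^ (-(ℓ i))) ≤ 1 / k := by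
    rw [← Finset.mul_sum]
    calc (1 / (k:ℝ)) * ∑ i, (2:ℝ) ^ (-(ℓ i)) ≤ (1 / k) * 1 :=
          mul_le_mul_of_nonneg_left hkraft (by positivity)
      _ = 1 / k := by ring
  have h1 : (2:ℝ) ^ (-(∑ i, ℓ i) / k) ≤ 1 / k := hprod ▸ le_trans amgm hsum
  have h2 : (1 / (k:ℝ)) = (2:ℝ) ^ (-(Real.logb 2 k)) := by
    rw [Real.rpow_neg (by norm_num), Real.rpow_logb (by norm_num) (by norm_num) hk0, one_div]
  rw [h2] at h1
  have h3 : (-(∑ i, ℓ i) / k) ≤ -(Real.logb 2 k) :=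
    (Real.rpow_le_rpow_left_iff (by norm_num : (1:ℝ) < 2)).mp h1
  have h4 := (div_le_iff₀ hk0).mp h3
  linarith

/-- For the uniform pmf on `k ≥ 2` symbols, the lengths `ℓᵢ = log₂ k` satisfy
Kraft with equality, minimize the age functional `E[L²]/(2E[L]) + E[L]` over all
Kraft-feasible nonnegative real-valued lengths, and achieve `Δ = (3/2) log₂ k`. -/
theorem uniform_pmf_optimal_lengths {k : ℕ} (hk : 2 ≤ k)
    (Δ : (Fin k → ℝ) → ℝ)
    (hΔ : ∀ ℓ : Fin k → ℝ,
      Δ ℓ = ((1 / (k:ℝ)) * ∑ i, (ℓ i)^2) / (2 * ((1 / (k:ℝ)) * ∑ i, ℓ i))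
        + (1 / (k:ℝ)) * ∑ i, ℓ i)
    (ℓstar : Fin k → ℝ) (hℓstar : ∀ i, ℓstar i = Real.logb 2 k) :
    (∑ i, (2:ℝ) ^ (-(ℓstar i))) = 1 ∧
    (∀ ℓ : Fin k → ℝ, (∀ i, 0 ≤ ℓ i) → (∑ i, (2:ℝ) ^ (-(ℓ i))) ≤ 1 →
      Δ ℓstar ≤ Δ ℓ) ∧
    Δ ℓstar = (3/2) * Real.logb 2 k := by
  have hk0 : (0:ℝ) < k := by exact_mod_cast (by omega : 0 < k)
  have hL : 0 < Real.logb 2 k :=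
    Real.logb_pos (by norm_num) (by exact_mod_cast (by omega : 1 < k))
  set L := Real.logb 2 k with hLdef
  have hpow : (2:ℝ) ^ (-L) = 1 / k := by
    rw [Real.rpow_neg (by norm_num), Real.rpow_logb (by norm_num) (by norm_num) hk0, one_div]
  have hsumstar : (∑ i, ℓstar i) = k * L := by
    simp [hℓstar, Finset.sum_const, Finset.card_univ]
  have hsumsqstar : (∑ i, (ℓstar i)^2) = k * L^2 := by
    simp [hℓstar, Finset.sum_const, Finset.card_univ]
  have hΔstar : Δ ℓstar = (3/2) * L := by
    rw [hΔ, hsumstar, hsumsqstar]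
    field_simp
    ring
  refine ⟨?_, ?_, hΔstar⟩
  · simp only [hℓstar, hpow, Finset.sum_const, Finset.card_univ, Fintype.card_fin, nsmul_eq_mul]
    field_simp
  · intro ℓ hnn hkraft
    have hs := kraft_sum_lower hk ℓ hnn hkraft
    have hs0 : 0 < ∑ i, ℓ i := lt_of_lt_of_le (by positivity) hs
    have hsq : (∑ i, ℓ i)^2 ≤ (k:ℝ) * ∑ i, (ℓ i)^2 := by
      have := sq_sum_le_card_mul_sum_sq (s := (univ : Finset (Fin k))) (f := ℓ)
      simpa [Finset.card_univ] using this
    rw [hΔ ℓ, hΔstar]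
    set s := ∑ i, ℓ i
    set q := ∑ i, (ℓ i)^2
    have h1 : (3/2) * L ≤ (3/2) * (s / k) := by
      have : L ≤ s / k := (le_div_iff₀ hk0).mpr (by linarith)
      linarith
    have h2 : (3/2) * (s / k) ≤ ((1 / (k:ℝ)) * q) / (2 * ((1 / (k:ℝ)) * s)) + (1 / (k:ℝ)) * s := by
      rw [div_add' _ _ _ (by positivity), le_div_iff₀ (by positivity)]
      have hkne : (k:ℝ) ≠ 0 := ne_of_gt hk0
      field_simp
      nlinarith [mul_le_mul_of_nonneg_right hsq (by positivity : (0:ℝ) ≤ (k:ℝ)^3), hs0, hk0]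
    linarith
end

section
/- For a sequence of i.i.d. positive service times $s_1, s_2, \dots$ with finite second moment, the long-term average age $\lim_{T\to\infty} \frac{1}{T}\int_0^T a(t)\,dt$ of a zero-wait update system equals $\frac{\mathbb{E}[S^2]}{2\mathbb{E}[S]} + \mathbb{E}[S]$ almost surely, where over the interval between the $i$-th and $(i+1)$-th deliveries the area under $a(t)$ contributes $\frac{1}{2}s_{i+1}^2 + s_i s_{i+1}$. -/
open Finset MeasureTheory ProbabilityTheory Filter

set_option maxHeartbeats 1000000

lemma ratio_lim1 : Tendsto (fun k : ℕ => (2*(k:ℝ))/(2*k+1)) atTop (nhds 1) := by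
  have h2 : Tendsto (fun k : ℕ => 2*(k:ℝ)+1) atTop atTop := by
    apply tendsto_atTop_add_const_right
    exact (tendsto_natCast_atTop_atTop (R := ℝ)).const_mul_atTop (by norm_num)
  have h := tendsto_inv_atTop_zero.comp h2
  have h' := (tendsto_const_nhds (x := (1:ℝ)) (f := atTop)).sub h
  rw [sub_zero] at h'
  refine h'.congr' ?_
  filter_upwards [eventually_ge_atTop 1] with k hk
  have hk' : (2*(k:ℝ)+1) ≠ 0 := by positivity
  simp only [Function.comp]
  field_simp
  ring

lemma ratio_lim2 : Tendsto (fun k : ℕ => (2*(k:ℝ)+2)/(2*k)) atTop (nhds 1) := by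
  have h2 : Tendsto (fun k : ℕ => 2*(k:ℝ)) atTop atTop :=
    (tendsto_natCast_atTop_atTop (R := ℝ)).const_mul_atTop (by norm_num)
  have h := tendsto_inv_atTop_zero.comp h2
  have h' := (tendsto_const_nhds (x := (1:ℝ)) (f := atTop)).add (h.const_mul 2)
  rw [mul_zero, add_zero] at h'
  refine h'.congr' ?_
  filter_upwards [eventually_ge_atTop 1] with k hk
  have hk0 : (k:ℝ) ≠ 0 := by positivity
  simp only [Function.comp]
  field_simp

lemma nat_half_atTop : Tendsto (fun n : ℕ => n/2) atTop atTop := by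
  refine tendsto_atTop.2 fun b => eventually_atTop.2 ⟨2*b, fun n hn => ?_⟩
  omega

lemma even_odd_avg (c : ℕ → ℝ) (hc : ∀ n, 0 ≤ c n) (L : ℝ)
    (hE : Tendsto (fun k : ℕ => (∑ j ∈ range k, c (2*j)) / k) atTop (nhds L))
    (hO : Tendsto (fun k : ℕ => (∑ j ∈ range k, c (2*j+1)) / k) atTop (nhds L)) :
    Tendsto (fun n : ℕ => (∑ i ∈ range n, c i) / n) atTop (nhds L) := by
  set d : ℕ → ℝ := fun n => ∑ i ∈ range n, c i with hd
  have hdnn : ∀ n, 0 ≤ d n := fun n => Finset.sum_nonneg fun i _ => hc i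
  have hdmono : Monotone d := by
    apply monotone_nat_of_le_succ
    intro n
    rw [hd]
    simp only [Finset.sum_range_succ]
    linarith [hc n]
  have hsplit : ∀ k, d (2*k) = (∑ j ∈ range k, c (2*j)) + (∑ j ∈ range k, c (2*j+1)) := by
    intro k
    induction k with
    | zero => simp [hd]
    | succ k ih =>
      have h2 : 2*(k+1) = (2*k+1)+1 := by ring
      simp only [hd] at ih ⊢
      rw [h2, Finset.sum_range_succ, Finset.sum_range_succ (n := 2*k),
        Finset.sum_range_succ (f := fun j => c (2*j)), Finset.sum_range_succ (f := fun j => c (2*j+1)), ih]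
      ring
  have heven : Tendsto (fun k : ℕ => d (2*k) / (2*(k:ℝ))) atTop (nhds L) := by
    have h := (hE.add hO).div_const 2
    have heq : ∀ k : ℕ, ((∑ j ∈ range k, c (2*j))/k + (∑ j ∈ range k, c (2*j+1))/k)/2
        = d (2*k) / (2*(k:ℝ)) := by
      intro k
      rw [hsplit k, ← add_div, div_div, mul_comm]
    have : (L + L)/2 = L := by ring
    rw [this] at h
    exact h.congr heq
  -- lower and upper sequences
  have hlow : Tendsto (fun k : ℕ => (d (2*k) / (2*(k:ℝ))) * ((2*(k:ℝ))/(2*k+1)))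
      atTop (nhds L) := by simpa using heven.mul ratio_lim1
  have hup : Tendsto (fun k : ℕ => (d (2*(k+1)) / (2*((k:ℝ)+1))) * ((2*(k:ℝ)+2)/(2*k)))
      atTop (nhds L) := by
    have h1 : Tendsto (fun k : ℕ => d (2*(k+1)) / (2*((k:ℝ)+1))) atTop (nhds L) := by
      have := heven.comp (tendsto_add_atTop_nat 1)
      refine this.congr fun k => ?_
      simp only [Function.comp]
      push_cast
      ring_nf
    simpa using h1.mul ratio_lim2
  refine tendsto_of_tendsto_of_tendsto_of_le_of_le'
    (hlow.comp nat_half_atTop) (hup.comp nat_half_atTop) ?_ ?_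
  · filter_upwards [eventually_ge_atTop 2] with n hn
    set k := n/2 with hk
    have hk1 : 1 ≤ k := by omega
    have h2k : 2*k ≤ n := by omega
    have hn2 : n ≤ 2*k+1 := by omega
    have hkpos : (0:ℝ) < 2*(k:ℝ) := by positivity
    have heq : (d (2*k) / (2*(k:ℝ))) * ((2*(k:ℝ))/(2*k+1)) = d (2*k) / (2*(k:ℝ)+1) := by
      field_simp
    simp only [Function.comp]
    rw [heq]
    have hnpos : (0:ℝ) < n := by positivity
    calc d (2*k) / (2*(k:ℝ)+1) ≤ d n / (2*(k:ℝ)+1) := by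
          gcongr
          exact hdmono h2k
      _ ≤ d n / n := by
          gcongr
          · exact hdnn n
          · exact_mod_cast hn2
  · filter_upwards [eventually_ge_atTop 2] with n hn
    set k := n/2 with hk
    have hk1 : 1 ≤ k := by omega
    have h2k : 2*k ≤ n := by omega
    have hn2 : n ≤ 2*k+2 := by omega
    have hkpos : (0:ℝ) < 2*(k:ℝ) := by positivity
    have hnpos : (0:ℝ) < n := by positivity
    have heq : (d (2*(k+1)) / (2*((k:ℝ)+1))) * ((2*(k:ℝ)+2)/(2*k)) = d (2*k+2) / (2*(k:ℝ)) := by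
      have : 2*(k+1) = 2*k+2 := by ring
      rw [this]
      have h1 : (2*((k:ℝ)+1)) ≠ 0 := by positivity
      field_simp
    simp only [Function.comp]
    rw [heq]
    calc d n / (n:ℝ) ≤ d (2*k+2) / (n:ℝ) := by
          gcongr
          exact hdmono hn2
      _ ≤ d (2*k+2) / (2*(k:ℝ)) := by
          gcongr
          · exact hdnn _
          · exact_mod_cast h2k

lemma det_piece (s : ℕ → ℝ) (hpos : ∀ n, 0 < s n)
    (a : ℝ → ℝ) (D : ℕ → ℝ) (hD : ∀ n, D n = ∑ i ∈ range n, s i)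
    (ha0 : ∀ t, 0 ≤ t → t < D 1 → a t = t)
    (ha : ∀ n t, 1 ≤ n → D n ≤ t → t < D (n + 1) → a t = t - D n + s (n - 1))
    (e : ℕ → ℝ) (he : e = fun n => if n = 0 then 0 else s (n-1))
    (n : ℕ) (T : ℝ) (h1 : D n ≤ T) (h2 : T ≤ D (n+1)) :
    IntervalIntegrable a volume (D n) T ∧
      ∫ t in (D n)..T, a t = (T - D n)^2/2 + e n * (T - D n) := by
  have hDnn : ∀ k, 0 ≤ D k := by
    intro k; rw [hD]; exact Finset.sum_nonneg fun i _ => (hpos i).le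
  have hae : ∀ t, D n ≤ t → t < D (n+1) → a t = t - D n + e n := by
    intro t ht1 ht2
    match n with
    | 0 =>
      have hD0 : D 0 = 0 := by simp [hD]
      rw [ha0 t (hD0 ▸ ht1) ht2, he]
      simp [hD0]
    | (k+1) =>
      rw [ha (k+1) t (by omega) ht1 ht2, he]
      simp
  set g : ℝ → ℝ := fun t => t - D n + e n with hg
  have hcong : ∀ᵐ t : ℝ, t ∈ Set.uIoc (D n) T → a t = g t := by
    have hne : ∀ᵐ t : ℝ, t ≠ D (n+1) := by
      rw [ae_iff]
      have : {t : ℝ | ¬ t ≠ D (n+1)} = {D (n+1)} := by ext x; simp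
      rw [this]
      exact measure_singleton _
    filter_upwards [hne] with t ht hmem
    rw [Set.uIoc_of_le h1] at hmem
    obtain ⟨hm1, hm2⟩ := hmem
    exact hae t hm1.le (lt_of_le_of_ne (le_trans hm2 h2) ht)
  have hgc : Continuous g := by
    rw [hg]; exact (continuous_id.sub continuous_const).add continuous_const
  have hgint : IntervalIntegrable g volume (D n) T := hgc.intervalIntegrable _ _
  have hres : a =ᵐ[volume.restrict (Set.uIoc (D n) T)] g :=
    (ae_restrict_iff' measurableSet_uIoc).2 hcong
  have haint : IntervalIntegrable a volume (D n) T := hgint.congr_ae hres.symm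
  refine ⟨haint, ?_⟩
  rw [intervalIntegral.integral_congr_ae hcong]
  have hadd : ∫ t in (D n)..T, (t + (e n - D n))
      = (∫ t in (D n)..T, t) + ∫ t in (D n)..T, (e n - D n) :=
    intervalIntegral.integral_add (Continuous.intervalIntegrable continuous_id' _ _)
      intervalIntegrable_const
  have hgeq : ∀ t : ℝ, g t = t + (e n - D n) := by intro t; rw [hg]; ring
  simp only [hgeq]
  rw [hadd, integral_id, intervalIntegral.integral_const, smul_eq_mul]
  ring

lemma inv_nat_sub_lim : Tendsto (fun n : ℕ => ((n:ℝ)-1)/n) atTop (nhds 1) := by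
  have h := tendsto_one_div_atTop_nhds_zero_nat (𝕜 := ℝ)
  have h' := (tendsto_const_nhds (x := (1:ℝ)) (f := atTop)).sub h
  rw [sub_zero] at h'
  refine h'.congr' ?_
  filter_upwards [eventually_ge_atTop 1] with n hn
  have : (n:ℝ) ≠ 0 := by positivity
  field_simp

lemma add_one_nat_lim : Tendsto (fun n : ℕ => ((n:ℝ)+1)/n) atTop (nhds 1) := by
  have h := tendsto_one_div_atTop_nhds_zero_nat (𝕜 := ℝ)
  have h' := (tendsto_const_nhds (x := (1:ℝ)) (f := atTop)).add h
  rw [add_zero] at h'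
  refine h'.congr' ?_
  filter_upwards [eventually_ge_atTop 1] with n hn
  have : (n:ℝ) ≠ 0 := by positivity
  field_simp

lemma det_age_limit (s : ℕ → ℝ) (hpos : ∀ n, 0 < s n) {m m2 : ℝ} (hm : 0 < m)
    (h1 : Tendsto (fun n : ℕ => (∑ i ∈ range n, s i) / n) atTop (nhds m))
    (h2 : Tendsto (fun n : ℕ => (∑ i ∈ range n, (s i)^2) / n) atTop (nhds m2))
    (h3 : Tendsto (fun n : ℕ => (∑ i ∈ range n, s i * s (i+1)) / n) atTop (nhds (m^2)))
    (a : ℝ → ℝ) (D : ℕ → ℝ) (hD : ∀ n, D n = ∑ i ∈ range n, s i)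
    (ha0 : ∀ t, 0 ≤ t → t < D 1 → a t = t)
    (ha : ∀ n t, 1 ≤ n → D n ≤ t → t < D (n + 1) → a t = t - D n + s (n - 1)) :
    Tendsto (fun T : ℝ => (∫ t in (0:ℝ)..T, a t) / T) atTop
      (nhds (m2 / (2 * m) + m)) := by
  set e : ℕ → ℝ := fun n => if n = 0 then 0 else s (n-1) with he
  have henn : ∀ n, 0 ≤ e n := by
    intro n; rw [he]
    dsimp only
    split
    · exact le_refl 0
    · exact (hpos _).le
  have hD0 : D 0 = 0 := by simp [hD]
  have hDs : ∀ n, D (n+1) = D n + s n := by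
    intro n; rw [hD, hD, Finset.sum_range_succ]
  have hDmono : StrictMono D :=
    strictMono_nat_of_lt_succ fun n => by rw [hDs]; linarith [hpos n]
  have hDnn : ∀ n, 0 ≤ D n := by
    intro n; rw [hD]; exact Finset.sum_nonneg fun i _ => (hpos i).le
  have hD1pos : 0 < D 1 := by rw [hDs, hD0]; simpa using hpos 0
  set F : ℕ → ℝ := fun n => (∑ i ∈ range n, (s i)^2)/2 + ∑ i ∈ range (n-1), s i * s (i+1)
    with hF
  have hFnn : ∀ n, 0 ≤ F n := by
    intro n; rw [hF]
    have q1 : (0:ℝ) ≤ ∑ i ∈ range n, (s i)^2 :=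
      Finset.sum_nonneg fun i _ => sq_nonneg _
    have q2 : (0:ℝ) ≤ ∑ i ∈ range (n-1), s i * s (i+1) :=
      Finset.sum_nonneg fun i _ => le_of_lt (mul_pos (hpos _) (hpos _))
    dsimp only
    linarith
  have hFrec : ∀ n, F (n+1) = F n + ((s n)^2/2 + e n * s n) := by
    intro n
    match n with
    | 0 => rw [hF]; simp [he, Finset.sum_range_succ]
    | (k+1) =>
      rw [hF, he]
      dsimp only
      rw [show k+1+1-1 = k+1 from rfl, show k+1-1 = k from rfl]
      rw [Finset.sum_range_succ (f := fun i => (s i)^2),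
        Finset.sum_range_succ (f := fun i => s i * s (i+1))]
      simp only [Nat.add_eq_zero, and_false, if_false, Nat.succ_ne_zero]
      ring
  -- full integral up to D n
  have hint : ∀ n, IntervalIntegrable a volume 0 (D n) ∧
      ∫ t in (0:ℝ)..(D n), a t = F n := by
    intro n
    induction n with
    | zero =>
      rw [hD0]
      constructor
      · exact IntervalIntegrable.refl
      · rw [intervalIntegral.integral_same, hF]; simp
    | succ n ih =>
      have hple : D n ≤ D (n+1) := (hDmono (Nat.lt_succ_self n)).le
      obtain ⟨hi, hv⟩ := det_piece s hpos a D hD ha0 ha e he n (D (n+1)) hple le_rfl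
      constructor
      · exact ih.1.trans hi
      · rw [← intervalIntegral.integral_add_adjacent_intervals ih.1 hi, ih.2, hv,
          hFrec n, hDs n]
        ring
  -- integral up to arbitrary T
  have hGT : ∀ n T, D n ≤ T → T ≤ D (n+1) →
      ∫ t in (0:ℝ)..T, a t = F n + ((T - D n)^2/2 + e n * (T - D n)) := by
    intro n T hT1 hT2
    obtain ⟨hi, hv⟩ := det_piece s hpos a D hD ha0 ha e he n T hT1 hT2
    rw [← intervalIntegral.integral_add_adjacent_intervals (hint n).1 hi, (hint n).2, hv]
  -- limits
  have hDn : Tendsto (fun n : ℕ => D n / n) atTop (nhds m) := by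
    refine h1.congr fun n => ?_; rw [hD]
  have hDtop : Tendsto D atTop atTop := by
    have hmul := Filter.Tendsto.pos_mul_atTop hm hDn (tendsto_natCast_atTop_atTop (R := ℝ))
    refine Filter.Tendsto.congr' ?_ hmul
    filter_upwards [eventually_ge_atTop 1] with n hn
    have : (n:ℝ) ≠ 0 := by positivity
    field_simp
  have hL' : Tendsto (fun n : ℕ => F n / n) atTop (nhds (m2/2 + m^2)) := by
    have hA := h2.div_const 2
    have hB : Tendsto (fun n : ℕ => (∑ i ∈ range (n-1), s i * s (i+1)) / n) atTop
        (nhds (m^2)) := by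
      have hcomp := h3.comp (tendsto_sub_atTop_nat 1)
      have hprod := hcomp.mul inv_nat_sub_lim
      rw [mul_one] at hprod
      refine hprod.congr' ?_
      filter_upwards [eventually_ge_atTop 2] with n hn
      simp only [Function.comp]
      have hc : ((n-1 : ℕ):ℝ) = (n:ℝ) - 1 := by
        have : (1:ℕ) ≤ n := by omega
        push_cast [this]; ring
      rw [hc]
      have hne : (n:ℝ) - 1 ≠ 0 := by
        have : (2:ℝ) ≤ (n:ℝ) := by exact_mod_cast hn
        linarith
      field_simp
    have := hA.add hB
    refine this.congr fun n => ?_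
    rw [hF]
    dsimp only
    rw [add_div, div_right_comm]
  have hDn1 : Tendsto (fun n : ℕ => D (n+1) / n) atTop (nhds m) := by
    have hcomp := hDn.comp (tendsto_add_atTop_nat 1)
    have hprod := hcomp.mul add_one_nat_lim
    rw [mul_one] at hprod
    refine hprod.congr' ?_
    filter_upwards [eventually_ge_atTop 1] with n hn
    simp only [Function.comp]
    have h0 : (n:ℝ) ≠ 0 := by positivity
    have h1' : ((n+1:ℕ):ℝ) = (n:ℝ)+1 := by push_cast; ring
    rw [h1']
    have h2' : (n:ℝ)+1 ≠ 0 := by positivity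
    field_simp
  have hFn1 : Tendsto (fun n : ℕ => F (n+1) / n) atTop (nhds (m2/2 + m^2)) := by
    have hcomp := hL'.comp (tendsto_add_atTop_nat 1)
    have hprod := hcomp.mul add_one_nat_lim
    rw [mul_one] at hprod
    refine hprod.congr' ?_
    filter_upwards [eventually_ge_atTop 1] with n hn
    simp only [Function.comp]
    have h0 : (n:ℝ) ≠ 0 := by positivity
    have h1' : ((n+1:ℕ):ℝ) = (n:ℝ)+1 := by push_cast; ring
    rw [h1']
    have h2' : (n:ℝ)+1 ≠ 0 := by positivity
    field_simp
  set L : ℝ := m2 / (2*m) + m with hLdef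
  have hLeq : (m2/2 + m^2)/m = L := by rw [hLdef]; field_simp
  have hu : Tendsto (fun n : ℕ => F n / D (n+1)) atTop (nhds L) := by
    have := hL'.div hDn1 (ne_of_gt hm)
    rw [hLeq] at this
    refine this.congr' ?_
    filter_upwards [eventually_ge_atTop 1] with n hn
    have h0 : (n:ℝ) ≠ 0 := by positivity
    simp only [Pi.div_apply]
    rw [div_div_div_cancel_right₀ h0]
  have hv : Tendsto (fun n : ℕ => F (n+1) / D n) atTop (nhds L) := by
    have := hFn1.div hDn (ne_of_gt hm)
    rw [hLeq] at this
    refine this.congr' ?_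
    filter_upwards [eventually_ge_atTop 1] with n hn
    have h0 : (n:ℝ) ≠ 0 := by positivity
    simp only [Pi.div_apply]
    rw [div_div_div_cancel_right₀ h0]
  -- final epsilon argument
  rw [Metric.tendsto_atTop]
  intro ε hε
  obtain ⟨N1, hN1⟩ := Metric.tendsto_atTop.1 hu ε hε
  obtain ⟨N2, hN2⟩ := Metric.tendsto_atTop.1 hv ε hε
  set N : ℕ := max (max N1 N2) 1 with hN
  refine ⟨D N, fun T hT => ?_⟩
  have hN1' : 1 ≤ N := le_max_right _ _
  have hTnn : 0 ≤ T := le_trans (hDnn N) hT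
  have hex : ∃ k, T < D (k+1) := by
    obtain ⟨k, hk⟩ := (hDtop.eventually (eventually_gt_atTop T)).exists
    exact ⟨k, lt_of_lt_of_le hk (hDmono.monotone (Nat.le_succ k))⟩
  set n : ℕ := Nat.find hex with hn
  have hn2 : T < D (n+1) := Nat.find_spec hex
  have hn1 : D n ≤ T := by
    match hq : n with
    | 0 => rw [hD0]; exact hTnn
    | (k+1) =>
      by_contra hcon
      push_neg at hcon
      exact absurd hcon (by simpa using Nat.find_min hex (by omega : k < n))
  have hnN : N ≤ n := by
    by_contra hcon
    push_neg at hcon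
    have : D (n+1) ≤ D N := hDmono.monotone (by omega)
    linarith
  have hn1' : 1 ≤ n := le_trans hN1' hnN
  have hTpos : 0 < T := lt_of_lt_of_le (lt_of_lt_of_le hD1pos (hDmono.monotone hn1')) hn1
  have hDnpos : 0 < D n := lt_of_lt_of_le hD1pos (hDmono.monotone hn1')
  have hGTval := hGT n T hn1 hn2.le
  set x : ℝ := T - D n with hx
  have hx0 : 0 ≤ x := by rw [hx]; linarith
  have hxs : x < s n := by rw [hx]; have := hDs n; linarith
  have hlb : F n ≤ ∫ t in (0:ℝ)..T, a t := by
    rw [hGTval]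
    have : 0 ≤ x^2/2 + e n * x :=
      add_nonneg (by positivity) (mul_nonneg (henn n) hx0)
    linarith
  have hub : (∫ t in (0:ℝ)..T, a t) ≤ F (n+1) := by
    rw [hGTval, hFrec n]
    have he' := henn n
    nlinarith [hpos n]
  have hFn' := hFnn n
  have hFn1' := hFnn (n+1)
  have hTle : T ≤ D (n+1) := hn2.le
  have hlow : F n / D (n+1) ≤ (∫ t in (0:ℝ)..T, a t) / T := by
    calc F n / D (n+1) ≤ F n / T := by gcongr
      _ ≤ (∫ t in (0:ℝ)..T, a t) / T := by gcongr
  have hup : (∫ t in (0:ℝ)..T, a t) / T ≤ F (n+1) / D n := by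
    calc (∫ t in (0:ℝ)..T, a t) / T ≤ F (n+1) / T := by gcongr
      _ ≤ F (n+1) / D n := by gcongr
  have hun := hN1 n (le_trans (le_trans (le_max_left _ _) (le_max_left _ 1)) hnN)
  have hvn := hN2 n (le_trans (le_trans (le_max_right _ _) (le_max_left _ 1)) hnN)
  rw [Real.dist_eq, abs_sub_lt_iff] at hun hvn ⊢
  constructor
  · linarith [hvn.1]
  · linarith [hun.2]

/-- For i.i.d. positive service times `s₀, s₁, …` with finite second moment in a
zero-wait update system, the long-term average age
`(1/T)∫₀ᵀ a(t) dt` converges almost surely to `E[S²]/(2E[S]) + E[S]`.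
Here `D n = s₀ + ⋯ + s_{n-1}` is the `n`-th delivery time; on `[D n, D (n+1))`
the age is `a(t) = t − D n + s_{n-1}` (and `a(t) = t` before the first
delivery), so the interval between consecutive deliveries contributes area
`½ s_{i+1}² + s_i s_{i+1}`. -/
theorem long_term_average_age {Ω : Type*} [MeasurableSpace Ω]
    (μ : Measure Ω) [IsProbabilityMeasure μ]
    (s : ℕ → Ω → ℝ)
    (hmeas : ∀ n, Measurable (s n))
    (hindep : iIndepFun s μ)
    (hident : ∀ n, IdentDistrib (s n) (s 0) μ μ)
    (hpos : ∀ n ω, 0 < s n ω)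
    (hmom2 : Integrable (fun ω => (s 0 ω)^2) μ)
    (D : Ω → ℕ → ℝ) (hD : ∀ ω n, D ω n = ∑ i ∈ Finset.range n, s i ω)
    (a : Ω → ℝ → ℝ)
    (ha0 : ∀ ω t, 0 ≤ t → t < D ω 1 → a ω t = t)
    (ha : ∀ ω n t, 1 ≤ n → D ω n ≤ t → t < D ω (n + 1) →
      a ω t = t - D ω n + s (n - 1) ω) :
    ∀ᵐ ω ∂μ, Tendsto (fun T : ℝ => (∫ t in (0:ℝ)..T, a ω t) / T) atTop
      (nhds ((∫ ω', (s 0 ω')^2 ∂μ) / (2 * ∫ ω', s 0 ω' ∂μ)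
        + ∫ ω', s 0 ω' ∂μ)) := by
  have hs0int : Integrable (s 0) μ := by
    refine Integrable.mono' ((integrable_const (1:ℝ)).add hmom2)
      (hmeas 0).aestronglyMeasurable ?_
    filter_upwards with ω
    rw [Real.norm_eq_abs, abs_of_pos (hpos 0 ω)]
    simp only [Pi.add_apply]
    nlinarith [sq_nonneg (s 0 ω - 1)]
  have hsint : ∀ n, Integrable (s n) μ := fun n => (hident n).integrable_iff.2 hs0int
  have hm_pos : 0 < ∫ ω', s 0 ω' ∂μ := by
    rw [integral_pos_iff_support_of_nonneg (fun ω => (hpos 0 ω).le) hs0int]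
    have hsupp : Function.support (s 0) = Set.univ :=
      Set.eq_univ_of_forall fun ω => (hpos 0 ω).ne'
    rw [hsupp]
    simp
  -- strong law for s itself
  have SLLN1 := strong_law_ae_real s hs0int (fun i j hij => hindep.indepFun hij) hident
  -- strong law for squares
  have SLLN2 := strong_law_ae_real (fun n ω => (s n ω)^2) hmom2
    (fun i j hij => (hindep.indepFun hij).comp (measurable_id.pow_const 2)
      (measurable_id.pow_const 2))
    (fun n => (hident n).comp (measurable_id.pow_const 2))
  -- identically distributed products
  have hmap : ∀ p q : ℕ, p ≠ q →
      μ.map (fun ω => (s p ω, s q ω)) = (μ.map (s 0)).prod (μ.map (s 0)) := by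
    intro p q hpq
    have h := (indepFun_iff_map_prod_eq_prod_map_map (hmeas p).aemeasurable
      (hmeas q).aemeasurable).1 (hindep.indepFun hpq)
    rw [h, (hident p).map_eq, (hident q).map_eq]
  have mulID : ∀ i j : ℕ, i ≠ j →
      IdentDistrib (fun ω => s i ω * s j ω) (fun ω => s 0 ω * s 1 ω) μ μ := by
    intro i j hij
    have pairID : IdentDistrib (fun ω => (s i ω, s j ω)) (fun ω => (s 0 ω, s 1 ω)) μ μ :=
      ⟨((hmeas i).prodMk (hmeas j)).aemeasurable,
        ((hmeas 0).prodMk (hmeas 1)).aemeasurable,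
        by rw [hmap i j hij, hmap 0 1 (by omega)]⟩
    exact pairID.comp measurable_mul
  have h01 : IndepFun (s 0) (s 1) μ := hindep.indepFun (by omega)
  have h12 : IndepFun (s 1) (s 2) μ := hindep.indepFun (by omega)
  have hmul01int : Integrable (fun ω => s 0 ω * s 1 ω) μ :=
    h01.integrable_mul hs0int (hsint 1)
  have hmul12int : Integrable (fun ω => s 1 ω * s 2 ω) μ :=
    h12.integrable_mul (hsint 1) (hsint 2)
  have e3 : (∫ ω, s 0 ω * s 1 ω ∂μ) = (∫ ω', s 0 ω' ∂μ)^2 := by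
    have h : (∫ ω, s 0 ω * s 1 ω ∂μ) = (∫ ω, s 0 ω ∂μ) * ∫ ω, s 1 ω ∂μ :=
      h01.integral_fun_mul_eq_mul_integral hs0int.1 (hsint 1).1
    rw [h, (hident 1).integral_eq, sq]
  have e4 : (∫ ω, s 1 ω * s 2 ω ∂μ) = (∫ ω', s 0 ω' ∂μ)^2 := by
    have h : (∫ ω, s 1 ω * s 2 ω ∂μ) = (∫ ω, s 1 ω ∂μ) * ∫ ω, s 2 ω ∂μ :=
      h12.integral_fun_mul_eq_mul_integral (hsint 1).1 (hsint 2).1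
    rw [h, (hident 1).integral_eq, (hident 2).integral_eq, sq]
  -- strong law for even-indexed products
  have SLLN3 := strong_law_ae_real (fun k ω => s (2*k) ω * s (2*k+1) ω) hmul01int
    (fun i j hij => hindep.indepFun_mul_mul hmeas (2*i) (2*i+1) (2*j) (2*j+1)
      (by omega) (by omega) (by omega) (by omega))
    (fun k => mulID (2*k) (2*k+1) (by omega))
  have SLLN4 := strong_law_ae_real (fun k ω => s (2*k+1) ω * s (2*k+2) ω) hmul12int
    (fun i j hij => hindep.indepFun_mul_mul hmeas (2*i+1) (2*i+2) (2*j+1) (2*j+2)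
      (by omega) (by omega) (by omega) (by omega))
    (fun k => (mulID (2*k+1) (2*k+2) (by omega)).trans (mulID 1 2 (by omega)).symm)
  rw [show (μ[fun ω => s (2*0) ω * s (2*0+1) ω]) = (∫ ω', s 0 ω' ∂μ)^2 from e3] at SLLN3
  rw [show (μ[fun ω => s (2*0+1) ω * s (2*0+2) ω]) = (∫ ω', s 0 ω' ∂μ)^2 from e4] at SLLN4
  filter_upwards [SLLN1, SLLN2, SLLN3, SLLN4] with ω hw1 hw2 hw3 hw4
  have h3ω : Tendsto (fun n : ℕ => (∑ i ∈ range n, s i ω * s (i+1) ω) / n) atTop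
      (nhds ((∫ ω', s 0 ω' ∂μ)^2)) := by
    refine even_odd_avg (fun i => s i ω * s (i+1) ω)
      (fun i => (mul_pos (hpos i ω) (hpos (i+1) ω)).le) _ ?_ ?_
    · exact hw3
    · exact hw4
  exact det_age_limit (fun n => s n ω) (fun n => hpos n ω) hm_pos hw1 hw2 h3ω
    (a ω) (D ω) (hD ω) (ha0 ω) (ha ω)
end
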